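/- Let p1, p2, p3 ∈ (0,1), q_i = 1 - p_i. If S, L, F are formal power series satisfying S = p1*L*S + q1*L, L = p2*z^2*F + q2*z, and F = p3*z^2*F + q3*L*S, then S satisfies p2*q3*z^2*S^2 - (1 - p1*q2*z)*(1 - p3*z^2)*S + q1*q2*z*(1 - p3*z^2) = 0. -/

import Mathlib

open PowerSeries in
/-- if formal power series `S, L, F` satisfy the DSV system of the
Knudsen–Hein grammar, then `S` satisfies the quadratic equation. -/
theorem system_implies_quadratic
    (p1 p2 p3 q1 q2 q3 : ℝ)
    (hp1 : p1 ∈ Set.Ioo (0:ℝ) 1) (hp2 : p2 ∈ Set.Ioo (0:ℝ) 1) (hp3 : p3 ∈ Set.Ioo (0:ℝ) 1)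
    (hq1 : q1 = 1 - p1) (hq2 : q2 = 1 - p2) (hq3 : q3 = 1 - p3)
    (S L F : PowerSeries ℝ)
    (h1 : S = C p1 * L * S + C q1 * L)
    (h2 : L = C p2 * X^2 * F + C q2 * X)
    (h3 : F = C p3 * X^2 * F + C q3 * L * S) :
    C (p2*q3) * X^2 * S^2
      - (1 - C (p1*q2) * X) * (1 - C p3 * X^2) * S
      + C (q1*q2) * X * (1 - C p3 * X^2) = 0 := by
  simp only [map_mul]
  linear_combination
    (C p2 * C q3 * X^2 * S - (1 - C p3 * X^2)) * h1
    + (-(C p1 * S + C q1) * (1 - C p3 * X^2)) * h2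
    + (-(C p1 * S + C q1) * (C p2 * X^2)) * h3
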